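/- Let m ≥ 1 and n_c ≥ 5 be integers. The winding-vector map induces a bijection between the set of configurations of the 1D honeycomb graph G(m, n_c) satisfying conditions (C1)–(C2), taken modulo global rotation (θ ∼ θ + c·(1,...,1) for c ∈ ℝ), and the set {k ∈ ℤ : |k| ≤ ⌈n_c/4⌉ − 1}^m. That is: for every vector (k_0, ..., k_{m−1}) of integers with |k_p| ≤ ⌈n_c/4⌉ − 1 for all p there exists a configuration satisfying (C1)–(C2) whose winding vector is (k_0, ..., k_{m−1}), and any two configurations satisfying (C1)–(C2) with the same winding vector differ by a global additive constant. -/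

import Mathlib

/-- The counterclockwise difference: the unique element of `[-π, π)` congruent to `x`
modulo `2π`. -/
noncomputable def dcc (x : ℝ) : ℝ :=
  x - 2 * Real.pi * ((⌊(x + Real.pi) / (2 * Real.pi)⌋ : ℤ) : ℝ)

/-- Conditions (C1)–(C2). -/
def satisfiesC (m nc : ℕ) (θ : ℕ → ℝ) (k : ℕ → ℤ) : Prop :=
  (∀ p, p < m → |k p| ≤ ⌈(nc : ℚ) / 4⌉ - 1) ∧
  (∀ p, p < m → ∀ i, p * (nc - 1) + 1 ≤ i → i ≤ (p + 1) * (nc - 1) →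
    θ (i + 1) - θ i = 2 * Real.pi * (k p : ℝ) / (nc : ℝ))

/-- The winding number of `θ` along the `p`-th basis cycle of the 1D honeycomb graph. -/
noncomputable def windingP (nc : ℕ) (θ : ℕ → ℝ) (p : ℕ) : ℝ :=
  (1 / (2 * Real.pi)) *
    ((∑ j ∈ Finset.range (nc - 1),
        dcc (θ (p * (nc - 1) + 1 + j + 1) - θ (p * (nc - 1) + 1 + j))) +
      dcc (θ (p * (nc - 1) + 1) - θ ((p + 1) * (nc - 1) + 1)))

lemma dcc_eq_self {x : ℝ} (h1 : -Real.pi ≤ x) (h2 : x < Real.pi) : dcc x = x := by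
  have hπ := Real.pi_pos
  have h0 : ⌊(x + Real.pi) / (2 * Real.pi)⌋ = 0 := by
    rw [Int.floor_eq_zero_iff, Set.mem_Ico]
    constructor
    · apply div_nonneg (by linarith) (by linarith)
    · rw [div_lt_one (by linarith)]; linarith
  simp [dcc, h0]

lemma dcc_sub_int (x : ℝ) (n : ℤ) : dcc (x - 2 * Real.pi * n) = dcc x := by
  have hπ : (2 * Real.pi) ≠ 0 := by positivity
  unfold dcc
  have h : (x - 2 * Real.pi * n + Real.pi) / (2 * Real.pi)
      = (x + Real.pi) / (2 * Real.pi) - n := by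
    field_simp; ring
  rw [h, Int.floor_sub_intCast]
  push_cast
  ring

lemma winding_eq {m nc : ℕ} (hnc : 5 ≤ nc) {θ : ℕ → ℝ} {k : ℕ → ℤ}
    (hC : satisfiesC m nc θ k) {p : ℕ} (hp : p < m) :
    windingP nc θ p = (k p : ℝ) := by
  obtain ⟨hk, hstep⟩ := hC
  have hπ := Real.pi_pos
  have hncR : (5 : ℝ) ≤ (nc : ℝ) := by exact_mod_cast hnc
  have hnc0 : (0 : ℝ) < (nc : ℝ) := by linarith
  set δ : ℝ := 2 * Real.pi * (k p : ℝ) / (nc : ℝ) with hδ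
  -- bound on k p
  have hkb : (4 : ℤ) * |k p| < (nc : ℤ) := by
    have h1 := hk p hp
    have h2 : (⌈(nc : ℚ) / 4⌉ : ℚ) - 1 < (nc : ℚ) / 4 := by
      have := Int.ceil_lt_add_one ((nc : ℚ) / 4)
      linarith
    have h3 : ((|k p| : ℤ) : ℚ) ≤ (⌈(nc : ℚ) / 4⌉ : ℚ) - 1 := by exact_mod_cast h1
    have h4 : ((4 * |k p| : ℤ) : ℚ) < ((nc : ℤ) : ℚ) := by push_cast; push_cast at h3; linarith
    exact_mod_cast h4
  have habs : 4 * |(k p : ℝ)| < (nc : ℝ) := by exact_mod_cast hkb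
  have hδlt : δ < Real.pi := by
    rw [hδ, div_lt_iff₀ hnc0]
    nlinarith [le_abs_self (k p : ℝ), abs_nonneg (k p : ℝ),
      mul_le_mul_of_nonneg_left (le_abs_self (k p : ℝ)) hπ.le]
  have hδge : -Real.pi ≤ δ := by
    rw [hδ, le_div_iff₀ hnc0]
    nlinarith [neg_abs_le (k p : ℝ), abs_nonneg (k p : ℝ),
      mul_le_mul_of_nonneg_left (neg_abs_le (k p : ℝ)) hπ.le]
  have hd : ∀ j, j < nc - 1 → θ (p * (nc - 1) + 1 + j + 1) - θ (p * (nc - 1) + 1 + j) = δ := by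
    intro j hj
    apply hstep p hp
    · exact Nat.le_add_right _ _
    · have h : (p + 1) * (nc - 1) = p * (nc - 1) + (nc - 1) := by ring
      rw [h]
      have : 1 + j ≤ nc - 1 := by omega
      omega
  have hsum : (∑ j ∈ Finset.range (nc - 1),
      dcc (θ (p * (nc - 1) + 1 + j + 1) - θ (p * (nc - 1) + 1 + j))) = (nc - 1 : ℕ) * δ := by
    rw [Finset.sum_congr rfl (fun j hj => by
      rw [hd j (Finset.mem_range.mp hj), dcc_eq_self hδge hδlt])]
    simp [mul_comm]
  have htel : θ ((p + 1) * (nc - 1) + 1) - θ (p * (nc - 1) + 1) = (nc - 1 : ℕ) * δ := by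
    have h := Finset.sum_range_sub (fun j => θ (p * (nc - 1) + 1 + j)) (nc - 1)
    have h2 : (∑ j ∈ Finset.range (nc - 1),
        (θ (p * (nc - 1) + 1 + (j + 1)) - θ (p * (nc - 1) + 1 + j))) = (nc - 1 : ℕ) * δ := by
      rw [Finset.sum_congr rfl (fun j hj => by
        rw [show p * (nc - 1) + 1 + (j + 1) = p * (nc - 1) + 1 + j + 1 by ring,
          hd j (Finset.mem_range.mp hj)])]
      simp [mul_comm]
    rw [h] at h2
    simpa [show p * (nc - 1) + 1 + (nc - 1) = (p + 1) * (nc - 1) + 1 by ring] using h2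
  have hncδ : (nc : ℝ) * δ = 2 * Real.pi * (k p : ℝ) := by
    rw [hδ]; field_simp
  have hcast : ((nc - 1 : ℕ) : ℝ) = (nc : ℝ) - 1 := by
    have : 1 ≤ nc := by omega
    push_cast [this]; ring
  have hchord : dcc (θ (p * (nc - 1) + 1) - θ ((p + 1) * (nc - 1) + 1)) = δ := by
    have h : θ (p * (nc - 1) + 1) - θ ((p + 1) * (nc - 1) + 1)
        = δ - 2 * Real.pi * ((k p : ℤ) : ℝ) := by
      have := htel
      rw [hcast] at this
      push_cast
      nlinarith [this, hncδ]
    rw [h, dcc_sub_int, dcc_eq_self hδge hδlt]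
  rw [windingP, hsum, hchord, hcast]
  have : ((nc : ℝ) - 1) * δ + δ = 2 * Real.pi * (k p : ℝ) := by nlinarith [hncδ]
  rw [this]
  field_simp

/-- the winding-vector map is a bijection between configurations satisfying
(C1)–(C2) modulo global rotation and the set `{k ∈ ℤ : |k| ≤ ⌈n_c/4⌉ - 1}^m`:
every admissible integer vector is realized as the winding vector of some configuration
satisfying (C1)–(C2), and any two configurations satisfying (C1)–(C2) with the same
winding vector differ by a global additive constant (on the vertex set). -/
theorem winding_vector_bijection (m nc : ℕ) (hm : 1 ≤ m) (hnc : 5 ≤ nc) :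
    (∀ k : ℕ → ℤ, (∀ p, p < m → |k p| ≤ ⌈(nc : ℚ) / 4⌉ - 1) →
      ∃ θ : ℕ → ℝ, satisfiesC m nc θ k ∧ ∀ p, p < m → windingP nc θ p = (k p : ℝ)) ∧
    (∀ θ φ : ℕ → ℝ, ∀ k k' : ℕ → ℤ,
      satisfiesC m nc θ k → satisfiesC m nc φ k' →
      (∀ p, p < m → windingP nc θ p = windingP nc φ p) →
      ∃ c : ℝ, ∀ i, 1 ≤ i → i ≤ m * (nc - 1) + 1 → θ i = φ i + c) := by
  have hb : 0 < nc - 1 := by omega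
  constructor
  · intro k hk
    set s : ℕ → ℝ := fun j =>
      if j = 0 then 0 else 2 * Real.pi * (k ((j - 1) / (nc - 1)) : ℝ) / (nc : ℝ) with hs
    refine ⟨fun i => ∑ j ∈ Finset.range i, s j, ?_, ?_⟩
    · refine ⟨hk, ?_⟩
      intro p hp i h1 h2
      have hi1 : 1 ≤ i := le_trans (Nat.le_add_left 1 _) h1
      have hstep : (∑ j ∈ Finset.range (i + 1), s j) - ∑ j ∈ Finset.range i, s j = s i := by
        rw [Finset.sum_range_succ]; ring
      rw [hstep, hs]
      simp only [if_neg (by omega : i ≠ 0)]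
      have hdiv : (i - 1) / (nc - 1) = p :=
        Nat.div_eq_of_lt_le
          (Nat.le_sub_one_of_lt (Nat.lt_of_lt_of_le (Nat.lt_succ_self _) h1))
          (Nat.lt_of_lt_of_le (Nat.sub_lt hi1 one_pos) h2)
      rw [hdiv]
    · intro p hp
      exact winding_eq hnc ⟨hk, by
        intro p hp i h1 h2
        have hi1 : 1 ≤ i := le_trans (Nat.le_add_left 1 _) h1
        have hstep : (∑ j ∈ Finset.range (i + 1), s j) - ∑ j ∈ Finset.range i, s j = s i := by
          rw [Finset.sum_range_succ]; ring
        rw [hstep, hs]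
        simp only [if_neg (by omega : i ≠ 0)]
        have hdiv : (i - 1) / (nc - 1) = p :=
          Nat.div_eq_of_lt_le
            (Nat.le_sub_one_of_lt (Nat.lt_of_lt_of_le (Nat.lt_succ_self _) h1))
            (Nat.lt_of_lt_of_le (Nat.sub_lt hi1 one_pos) h2)
        rw [hdiv]⟩ hp
  · intro θ φ k k' hθ hφ hw
    have hkk : ∀ p, p < m → (k p : ℝ) = (k' p : ℝ) := by
      intro p hp
      rw [← winding_eq hnc hθ hp, ← winding_eq hnc hφ hp]
      exact hw p hp
    refine ⟨θ 1 - φ 1, ?_⟩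
    intro i hi1 hi2
    induction i with
    | zero => omega
    | succ i ih =>
      rcases Nat.eq_zero_or_pos i with h0 | h0
      · subst h0; ring
      · have hile : i ≤ m * (nc - 1) := by omega
        have hedge : ∀ (ψ : ℕ → ℝ) (kk : ℕ → ℤ), satisfiesC m nc ψ kk →
            ψ (i + 1) - ψ i = 2 * Real.pi * (kk ((i - 1) / (nc - 1)) : ℝ) / (nc : ℝ) := by
          intro ψ kk hψ
          apply hψ.2
          · exact (Nat.div_lt_iff_lt_mul hb).mpr (Nat.lt_of_lt_of_le (Nat.sub_lt h0 one_pos) hile)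
          · have := Nat.div_mul_le_self (i - 1) (nc - 1)
            omega
          · have h5 := Nat.lt_div_mul_add (a := i - 1) hb
            have h6 : ((i - 1) / (nc - 1) + 1) * (nc - 1) = (i - 1) / (nc - 1) * (nc - 1) + (nc - 1) := by ring
            omega
        have hp : (i - 1) / (nc - 1) < m :=
          (Nat.div_lt_iff_lt_mul hb).mpr (Nat.lt_of_lt_of_le (Nat.sub_lt h0 one_pos) hile)
        have h1 := hedge θ k hθ
        have h2 := hedge φ k' hφ
        have h3 := hkk _ hp
        have h4 := ih h0 (by omega)
        rw [h3] at h1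
        linarith [h1, h2, h4]
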